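/- Let Λ : ℝ → [0,1] be decreasing and not identically 0, and define ΛVaR(X) = inf{x ∈ ℝ : P(X ≤ x) ≥ Λ(x)} for bounded X. Then ΛVaR(X) = inf_{x ∈ ℝ} (VaR_{Λ(x)}(X) ∨ x) = sup_{x ∈ ℝ} (VaR_{Λ(x)}(X) ∧ x), where VaR_t(X) = inf{y ∈ ℝ : P(X ≤ y) ≥ t} for t ∈ (0,1], and VaR_0(X) := −∞. -/
import Mathlib


open MeasureTheory

variable {Ω : Type*} [MeasurableSpace Ω]

/-- Value-at-Risk at level `t`, as an extended real: the left `t`-quantile for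
`t > 0`, and `−∞` for `t ≤ 0` (so `VaR_0 = −∞` by convention). -/
noncomputable def VaRe (μ : Measure Ω) (t : ℝ) (X : Ω → ℝ) : EReal :=
  if 0 < t then ((sInf {y : ℝ | t ≤ (μ {ω | X ω ≤ y}).toReal} : ℝ) : EReal) else ⊥

/-- `ΛVaR(X) = inf {x ∈ ℝ : P(X ≤ x) ≥ Λ(x)}`. -/
noncomputable def LVaR (μ : Measure Ω) (Λ : ℝ → ℝ) (X : Ω → ℝ) : ℝ :=
  sInf {x : ℝ | Λ x ≤ (μ {ω | X ω ≤ x}).toReal}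

/-- For a decreasing `Λ : ℝ → [0,1]` not identically `0` and bounded `X`:
`ΛVaR(X) = inf_x (VaR_{Λ(x)}(X) ∨ x) = sup_x (VaR_{Λ(x)}(X) ∧ x)`. -/
theorem LVaR_repr (μ : Measure Ω) [IsProbabilityMeasure μ]
    (Λ : ℝ → ℝ) (hΛ : Antitone Λ) (hΛ01 : ∀ x, Λ x ∈ Set.Icc (0 : ℝ) 1)
    (hΛne : ∃ x, Λ x ≠ 0)
    (X : Ω → ℝ) (hX : Measurable X) (hb : ∃ M, ∀ ω, |X ω| ≤ M) :
    ((LVaR μ Λ X : EReal) = ⨅ x : ℝ, max (VaRe μ (Λ x) X) (x : EReal)) ∧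
    ((LVaR μ Λ X : EReal) = ⨆ x : ℝ, min (VaRe μ (Λ x) X) (x : EReal)) := by
  obtain ⟨M, hM⟩ := hb
  obtain ⟨x₀, hx₀⟩ := hΛne
  have hx₀pos : 0 < Λ x₀ := lt_of_le_of_ne (hΛ01 x₀).1 (Ne.symm hx₀)
  set F : ℝ → ℝ := fun y => (μ {ω | X ω ≤ y}).toReal with hFdef
  have hFmono : Monotone F := fun a b hab =>
    ENNReal.toReal_mono (measure_ne_top μ _) (measure_mono (fun ω h => le_trans h hab))
  have hFnn : ∀ y, 0 ≤ F y := fun y => ENNReal.toReal_nonneg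
  have hF1 : ∀ y, M ≤ y → F y = 1 := by
    intro y hy
    have h1 : {ω | X ω ≤ y} = Set.univ := by
      ext ω
      simp only [Set.mem_setOf_eq, Set.mem_univ, iff_true]
      exact le_trans (le_trans (le_abs_self _) (hM ω)) hy
    simp [hFdef, h1]
  have hFneg : ∀ y, y < -M → F y = 0 := by
    intro y hy
    have h1 : {ω | X ω ≤ y} = ∅ := by
      ext ω
      simp only [Set.mem_setOf_eq, Set.mem_empty_iff_false, iff_false, not_le]
      exact lt_of_lt_of_le hy ((abs_le.mp (hM ω)).1)
    simp [hFdef, h1]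
  set S : Set ℝ := {x | Λ x ≤ F x} with hSdef
  have hMS : M ∈ S := by
    simp only [hSdef, Set.mem_setOf_eq, hF1 M le_rfl]
    exact (hΛ01 M).2
  have hSne : S.Nonempty := ⟨M, hMS⟩
  have hSbdd : BddBelow S := by
    refine ⟨min x₀ (-M) - 1, fun x hx => ?_⟩
    by_contra h
    push_neg at h
    have hxM : x < -M := lt_of_lt_of_le h (by linarith [min_le_right x₀ (-M)])
    have hxx0 : x ≤ x₀ := le_of_lt (lt_of_lt_of_le h (by linarith [min_le_left x₀ (-M)]))
    have h0 : Λ x ≤ 0 := le_of_le_of_eq hx (hFneg x hxM)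
    exact absurd (lt_of_lt_of_le hx₀pos (hΛ hxx0)) (not_lt.mpr h0)
  set ℓ : ℝ := sInf S with hldef
  have hSup : ∀ x ∈ S, ∀ y, x ≤ y → y ∈ S := fun x hx y hxy =>
    le_trans (hΛ hxy) (le_trans hx (hFmono hxy))
  have hmem : ∀ x, ℓ < x → x ∈ S := by
    intro x hx
    obtain ⟨s, hs, hsx⟩ := exists_lt_of_csInf_lt hSne hx
    exact hSup s hs x hsx.le
  have hnotmem : ∀ x, x < ℓ → x ∉ S := fun x hx h =>
    absurd (csInf_le hSbdd h) (not_le.mpr hx)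
  -- The VaR sets
  set T : ℝ → Set ℝ := fun t => {y : ℝ | t ≤ F y} with hTdef
  have hTne : ∀ t, t ≤ 1 → M ∈ T t := by
    intro t ht
    simp only [hTdef, Set.mem_setOf_eq, hF1 M le_rfl]
    exact ht
  have hTbdd : ∀ t, 0 < t → BddBelow (T t) := by
    intro t ht
    refine ⟨-M, fun y hy => ?_⟩
    by_contra h
    push_neg at h
    have : F y = 0 := hFneg y h
    simp only [hTdef, Set.mem_setOf_eq, this] at hy
    exact absurd (lt_of_lt_of_le ht hy) (lt_irrefl 0)
  -- key lemma for x < ℓ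
  have hkey : ∀ x, x < ℓ → 0 < Λ x ∧ ℓ ≤ sInf (T (Λ x)) := by
    intro x hx
    have hxS : x ∉ S := hnotmem x hx
    have hFx : F x < Λ x := not_le.mp hxS
    have hpos : 0 < Λ x := lt_of_le_of_lt (hFnn x) hFx
    refine ⟨hpos, le_csInf ⟨M, hTne _ (hΛ01 x).2⟩ fun y hy => ?_⟩
    by_contra h
    push_neg at h
    have hyS : y ∉ S := hnotmem y h
    have hFy : F y < Λ y := not_le.mp hyS
    rcases le_or_gt x y with hxy | hxy
    · exact absurd hy (not_le.mpr (lt_of_lt_of_le hFy (hΛ hxy)))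
    · exact absurd hy (not_le.mpr (lt_of_le_of_lt (hFmono hxy.le) hFx))
  -- key lemma for ℓ < x
  have hkey2 : ∀ x, ℓ < x → 0 < Λ x → sInf (T (Λ x)) ≤ ℓ := by
    intro x hx hpos
    refine le_of_forall_gt_imp_ge_of_dense fun y hy => ?_
    have hmin : ℓ < min x y := lt_min hx hy
    have hminS : min x y ∈ S := hmem _ hmin
    have hminT : min x y ∈ T (Λ x) :=
      le_trans (hΛ (min_le_left x y)) hminS
    exact le_trans (csInf_le (hTbdd _ hpos) hminT) (min_le_right x y)
  have hVaRe : ∀ t, VaRe μ t X = if 0 < t then ((sInf (T t) : ℝ) : EReal) else ⊥ := fun t => rfl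
  have hLV : LVaR μ Λ X = ℓ := rfl
  rw [hLV]
  constructor
  · refine le_antisymm (le_iInf fun x => ?_) ?_
    · rcases le_or_gt ℓ x with h | h
      · exact le_trans (EReal.coe_le_coe_iff.mpr h) (le_max_right _ _)
      · obtain ⟨hpos, hle⟩ := hkey x h
        rw [hVaRe, if_pos hpos]
        exact le_trans (EReal.coe_le_coe_iff.mpr hle) (le_max_left _ _)
    · refine le_of_forall_gt_imp_ge_of_dense fun c hc => ?_
      obtain ⟨r, hr1, hr2⟩ := EReal.exists_between_coe_real hc
      have hr : ℓ < r := EReal.coe_lt_coe_iff.mp hr1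
      refine le_trans (iInf_le _ r) (le_trans (max_le ?_ le_rfl) hr2.le)
      rw [hVaRe]
      rcases lt_or_ge 0 (Λ r) with hpos | hnp
      · rw [if_pos hpos]
        refine EReal.coe_le_coe_iff.mpr (csInf_le (hTbdd _ hpos) ?_)
        exact hmem r hr
      · rw [if_neg (not_lt.mpr hnp)]
        exact bot_le
  · refine le_antisymm ?_ (iSup_le fun x => ?_)
    · refine le_of_forall_lt_imp_le_of_dense fun c hc => ?_
      obtain ⟨r, hr1, hr2⟩ := EReal.exists_between_coe_real hc
      have hr : r < ℓ := EReal.coe_lt_coe_iff.mp hr2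
      obtain ⟨hpos, hle⟩ := hkey r hr
      refine le_trans hr1.le (le_trans ?_ (le_iSup _ r))
      refine le_min ?_ le_rfl
      rw [hVaRe, if_pos hpos]
      exact EReal.coe_le_coe_iff.mpr (le_trans hr.le hle)
    · rcases le_or_gt x ℓ with h | h
      · exact le_trans (min_le_right _ _) (EReal.coe_le_coe_iff.mpr h)
      · rw [hVaRe]
        rcases lt_or_ge 0 (Λ x) with hpos | hnp
        · rw [if_pos hpos]
          exact le_trans (min_le_left _ _) (EReal.coe_le_coe_iff.mpr (hkey2 x h hpos))
        · rw [if_neg (not_lt.mpr hnp)]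
          exact le_trans (min_le_left _ _) bot_le
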